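/- For every position 1 ≤ c ≤ n, SC[c] = max({0} ∪ { p·ℓ : ℓ ≥ 1 is an integer and w[i'..j'] is a run of w with smallest period p such that i' + p·ℓ ≤ c and c + p·ℓ − 1 ≤ j' }). -/

import Mathlib

/- Words are `List α`, positions are 1-based.  `ltr w i` is the letter at position `i`,
`fac w i j` is the factor `w[i..j]` (empty when `i > j`). -/

variable {α : Type*}

def ltr (w : List α) (i : ℕ) : Option α := w[i - 1]?

def fac (w : List α) (i j : ℕ) : List α := (w.take j).drop (i - 1)

/-- `p` is a period of the word `u` (1-based positions). -/
def IsPeriod (u : List α) (p : ℕ) : Prop :=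
  1 ≤ p ∧ p ≤ u.length ∧ ∀ k, 1 ≤ k → k ≤ u.length - p → ltr u k = ltr u (k + p)

/-- `per u` : the smallest period of `u`. -/
noncomputable def per (u : List α) : ℕ := sInf {p | IsPeriod u p}

/-- `w[i'..j']` is a run of `w`: its smallest period `p` satisfies `2p ≤ j'-i'+1`,
and the factor is maximal with respect to this period. -/
noncomputable def IsRun (w : List α) (i' j' : ℕ) : Prop :=
  1 ≤ i' ∧ i' ≤ j' ∧ j' ≤ w.length ∧
  2 * per (fac w i' j') ≤ j' - i' + 1 ∧
  (i' = 1 ∨ ltr w (i' - 1) ≠ ltr w (i' + per (fac w i' j') - 1)) ∧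
  (j' = w.length ∨ ltr w (j' + 1) ≠ ltr w (j' - per (fac w i' j') + 1))

/-- `SC w c` : the longest arm of a square centred at position `c`. -/
noncomputable def SC (w : List α) (c : ℕ) : ℕ :=
  sSup {m | ∃ u : List α, u.length = m ∧ u ≠ [] ∧
    u <:+ fac w 1 (c - 1) ∧ u <+: fac w c w.length}

/-- 0-based period on the half-open interval `[a, b)` of positions of `w`. -/
def PerOn (w : List α) (a b p : ℕ) : Prop :=
  ∀ x, a ≤ x → x + p < b → w[x]? = w[x + p]?

lemma fac_getElem? (w : List α) (i j t : ℕ) :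
    (fac w i j)[t]? = if i - 1 + t < j then w[i - 1 + t]? else none := by
  unfold fac
  rw [List.getElem?_drop]
  split
  · exact List.getElem?_take_of_lt ‹_›
  · refine List.getElem?_eq_none ?_
    simp only [List.length_take]
    omega

lemma fac_length (w : List α) (i j : ℕ) (hj : j ≤ w.length) :
    (fac w i j).length = j - (i - 1) := by
  simp only [fac, List.length_drop, List.length_take]
  omega

lemma isPeriod_fac_iff (w : List α) {i j : ℕ} (p : ℕ) (hi : 1 ≤ i) (hij : i ≤ j)
    (hj : j ≤ w.length) :
    IsPeriod (fac w i j) p ↔ 1 ≤ p ∧ i - 1 + p ≤ j ∧ PerOn w (i - 1) j p := by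
  unfold IsPeriod
  rw [fac_length w i j hj]
  constructor
  · rintro ⟨hp1, hp2, hper⟩
    refine ⟨hp1, by omega, fun x hax hxp => ?_⟩
    have h := hper (x - (i - 1) + 1) (by omega) (by omega)
    unfold ltr at h
    rw [fac_getElem?, fac_getElem?] at h
    rw [show x - (i-1) + 1 - 1 = x - (i-1) from by omega,
        show x - (i-1) + 1 + p - 1 = x - (i-1) + p from by omega] at h
    rw [if_pos (by omega), if_pos (by omega)] at h
    rw [show i - 1 + (x - (i-1)) = x from by omega,
        show i - 1 + (x - (i-1) + p) = x + p from by omega] at h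
    exact h
  · rintro ⟨hp1, hple, hper⟩
    refine ⟨hp1, by omega, fun k hk1 hk2 => ?_⟩
    unfold ltr
    rw [fac_getElem?, fac_getElem?]
    rw [if_pos (by omega), if_pos (by omega)]
    have h := hper (i - 1 + (k - 1)) (by omega) (by omega)
    rw [show i - 1 + (k - 1) + p = i - 1 + (k + p - 1) from by omega] at h
    exact h

lemma isPeriod_length {u : List α} (hu : u ≠ []) : IsPeriod u u.length :=
  ⟨List.length_pos_iff.mpr hu, le_rfl, fun _ hk1 hk2 => absurd hk1 (by omega)⟩

lemma per_isPeriod {u : List α} (hu : u ≠ []) : IsPeriod u (per u) := by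
  have h : {p | IsPeriod u p}.Nonempty := ⟨u.length, isPeriod_length hu⟩
  exact Nat.sInf_mem h

lemma per_le {u : List α} {q : ℕ} (h : IsPeriod u q) : per u ≤ q :=
  Nat.sInf_le (show q ∈ {p | IsPeriod u p} from h)

lemma one_le_per {u : List α} (hu : u ≠ []) : 1 ≤ per u := (per_isPeriod hu).1

lemma perOn_iterate {w : List α} {a b p : ℕ} (h : PerOn w a b p) :
    ∀ ℓ x, a ≤ x → x + p * ℓ < b → w[x]? = w[x + p * ℓ]? := by
  intro ℓ
  induction ℓ with
  | zero => intro x _ _; simp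
  | succ ℓ ih =>
    intro x hax hxb
    have hms : p * (ℓ + 1) = p * ℓ + p := Nat.mul_succ p ℓ
    rw [show x + p * (ℓ + 1) = x + p + p * ℓ from by omega]
    have h1 : w[x]? = w[x + p]? := h x hax (by omega)
    rw [h1]
    exact ih (x + p) (by omega) (by omega)

lemma fine_wilf {w : List α} (N : ℕ) : ∀ p q a b : ℕ, p + q ≤ N → 1 ≤ p → 1 ≤ q →
    PerOn w a b p → PerOn w a b q → a + p + q ≤ b → PerOn w a b (Nat.gcd p q) := by
  induction N with
  | zero => intro p q a b h hp hq _ _ _; exact absurd h (by omega)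
  | succ N ih =>
    intro p q a b hN hp hq hP hQ hab
    rcases lt_trichotomy p q with hlt | heq | hgt
    · have hsub : PerOn w a b (q - p) := by
        intro x hax hxb
        by_cases hxq : x + q < b
        · have h1 := hQ x hax hxq
          have h2 := hP (x + (q - p)) (by omega) (by omega)
          rw [show x + (q - p) + p = x + q from by omega] at h2
          rw [h1, h2]
        · have h1 := hP (x - p) (by omega) (by omega)
          have h2 := hQ (x - p) (by omega) (by omega)
          rw [show x - p + p = x from by omega] at h1
          rw [show x - p + q = x + (q - p) from by omega] at h2
          rw [← h1, h2]
      have hg := ih p (q - p) a b (by omega) hp (by omega) hP hsub (by omega)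
      rwa [Nat.gcd_sub_self_right hlt.le] at hg
    · subst heq
      rw [Nat.gcd_self]
      exact hP
    · have hsub : PerOn w a b (p - q) := by
        intro x hax hxb
        by_cases hxp : x + p < b
        · have h1 := hP x hax hxp
          have h2 := hQ (x + (p - q)) (by omega) (by omega)
          rw [show x + (p - q) + q = x + p from by omega] at h2
          rw [h1, h2]
        · have h1 := hQ (x - q) (by omega) (by omega)
          have h2 := hP (x - q) (by omega) (by omega)
          rw [show x - q + q = x from by omega] at h1
          rw [show x - q + p = x + (p - q) from by omega] at h2
          rw [← h1, h2]
      have hg := ih q (p - q) a b (by omega) hq (by omega) hQ hsub (by omega)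
      rwa [Nat.gcd_sub_self_right hgt.le, Nat.gcd_comm] at hg

lemma isPeriod_iff_perOn {u : List α} (hu : u ≠ []) (p : ℕ) :
    IsPeriod u p ↔ 1 ≤ p ∧ p ≤ u.length ∧ PerOn u 0 u.length p := by
  have hfac : fac u 1 u.length = u := by simp [fac]
  have h := isPeriod_fac_iff u (i := 1) (j := u.length) p le_rfl
    (List.length_pos_iff.mpr hu) le_rfl
  rw [hfac] at h
  simpa using h

lemma per_dvd {u : List α} {q : ℕ} (hu : u ≠ []) (hq : IsPeriod u q)
    (hlen : per u + q ≤ u.length) : per u ∣ q := by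
  have hp := per_isPeriod hu
  have hp1 := hp.1
  have hq1 := hq.1
  have hP := ((isPeriod_iff_perOn hu (per u)).mp hp).2.2
  have hQ := ((isPeriod_iff_perOn hu q).mp hq).2.2
  have hg := fine_wilf (w := u) (per u + q) (per u) q 0 u.length le_rfl hp1 hq1 hP hQ
    (by omega)
  have hgle : Nat.gcd (per u) q ≤ per u := Nat.gcd_le_left q hp1
  have hgper : IsPeriod u (Nat.gcd (per u) q) :=
    (isPeriod_iff_perOn hu _).mpr ⟨Nat.gcd_pos_of_pos_left q hp1, le_trans hgle hp.2.1, hg⟩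
  have hgeq : Nat.gcd (per u) q = per u := le_antisymm hgle (per_le hgper)
  rw [← hgeq]
  exact Nat.gcd_dvd_right (per u) q

lemma run_mem_SCset (w : List α) (c i' j' ℓ : ℕ) (hc : 1 ≤ c) (hl : 1 ≤ ℓ)
    (hrun : IsRun w i' j')
    (h1 : i' + per (fac w i' j') * ℓ ≤ c) (h2 : c + per (fac w i' j') * ℓ - 1 ≤ j') :
    ∃ u : List α, u.length = per (fac w i' j') * ℓ ∧ u ≠ [] ∧
      u <:+ fac w 1 (c - 1) ∧ u <+: fac w c w.length := by
  obtain ⟨hi1, hij, hjn, -, -, -⟩ := hrun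
  set p := per (fac w i' j') with hpdef
  have hfacne : fac w i' j' ≠ [] := by
    refine List.length_pos_iff.mp ?_
    rw [fac_length w i' j' hjn]
    omega
  have hp1 : 1 ≤ p := one_le_per hfacne
  have hPp : PerOn w (i' - 1) j' p := by
    have h := ((isPeriod_fac_iff w p hi1 hij hjn).mp (per_isPeriod hfacne)).2.2
    exact h
  set m := p * ℓ with hm
  have hm1 : 1 ≤ m := by
    rcases Nat.eq_zero_or_pos m with h | h
    · rw [hm] at h
      rcases Nat.mul_eq_zero.mp h with h' | h' <;> omega
    · exact h
  have hmc : m ≤ c - 1 := by omega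
  have hcm : c - 1 + m ≤ w.length := by omega
  refine ⟨(w.take (c-1)).drop (c-1-m), ?_, ?_, ?_, ?_⟩
  · simp only [List.length_drop, List.length_take]
    omega
  · refine List.length_pos_iff.mp ?_
    simp only [List.length_drop, List.length_take]
    omega
  · have hfac1 : fac w 1 (c-1) = w.take (c-1) := by simp [fac]
    rw [hfac1]
    exact List.drop_suffix _ _
  · have hfac2 : fac w c w.length = w.drop (c-1) := by simp [fac]
    rw [hfac2]
    have hequ : (w.take (c-1)).drop (c-1-m) = (w.drop (c-1)).take m := by
      apply List.ext_getElem?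
      intro t
      by_cases ht : t < m
      · have e1 : ((w.take (c-1)).drop (c-1-m))[t]? = w[c-1-m+t]? := by
          rw [List.getElem?_drop, List.getElem?_take_of_lt (show c-1-m+t < c-1 from by omega)]
        have e2 : ((w.drop (c-1)).take m)[t]? = w[c-1+t]? := by
          rw [List.getElem?_take_of_lt ht, List.getElem?_drop]
        rw [e1, e2]
        have h := perOn_iterate hPp ℓ (c-1-m+t) (by omega) (by omega)
        rwa [show c-1-m+t + p*ℓ = c-1+t from by omega] at h
      · rw [List.getElem?_eq_none, List.getElem?_eq_none]
        · simp only [List.length_take, List.length_drop]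
          omega
        · simp only [List.length_drop, List.length_take]
          omega
    rw [hequ]
    exact List.take_prefix _ _

lemma SCset_square (w : List α) (c m : ℕ) (hc : 1 ≤ c) (hcn : c ≤ w.length)
    (u : List α) (hul : u.length = m) (hne : u ≠ []) (hsuf : u <:+ fac w 1 (c-1))
    (hpre : u <+: fac w c w.length) :
    1 ≤ m ∧ m ≤ c - 1 ∧ c - 1 + m ≤ w.length ∧ PerOn w (c-1-m) (c-1+m) m := by
  obtain ⟨v, hv⟩ := hsuf
  obtain ⟨v', hv'⟩ := hpre
  have hfac1 : fac w 1 (c-1) = w.take (c-1) := by simp [fac]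
  have hfac2 : fac w c w.length = w.drop (c-1) := by simp [fac]
  rw [hfac1] at hv
  rw [hfac2] at hv'
  have hm1 : 1 ≤ m := by
    rcases Nat.eq_zero_or_pos m with h | h
    · rw [h] at hul
      exact absurd (List.length_eq_zero_iff.mp hul) hne
    · exact h
  have hlen1 : v.length + m = c - 1 := by
    have h := congrArg List.length hv
    simp only [List.length_append, List.length_take, hul] at h
    omega
  have hlen2 : m ≤ w.length - (c-1) := by
    have h := congrArg List.length hv'
    simp only [List.length_append, List.length_drop, hul] at h
    omega
  refine ⟨hm1, by omega, by omega, ?_⟩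
  intro x hax hxb
  have hxlt : x < c - 1 := by omega
  set t := x - (c - 1 - m) with htdef
  have htm : t < m := by omega
  have eL : w[x]? = u[t]? := by
    calc w[x]? = (w.take (c-1))[x]? := (List.getElem?_take_of_lt hxlt).symm
      _ = (v ++ u)[x]? := by rw [hv]
      _ = u[x - v.length]? := List.getElem?_append_right (by omega)
      _ = u[t]? := by rw [show x - v.length = t from by omega]
  have eR : w[x + m]? = u[t]? := by
    calc w[x + m]? = w[(c-1) + t]? := by rw [show x + m = c - 1 + t from by omega]
      _ = (w.drop (c-1))[t]? := List.getElem?_drop.symm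
      _ = (u ++ v')[t]? := by rw [hv']
      _ = u[t]? := List.getElem?_append_left (by omega)
  rw [eL, eR]

lemma square_to_run (w : List α) (c m : ℕ) (hc : 1 ≤ c)
    (hm : 1 ≤ m) (hmc : m ≤ c - 1) (hcm : c - 1 + m ≤ w.length)
    (hsq : PerOn w (c - 1 - m) (c - 1 + m) m) :
    ∃ i' j' ℓ : ℕ, 1 ≤ ℓ ∧ IsRun w i' j' ∧ i' + per (fac w i' j') * ℓ ≤ c ∧
      c + per (fac w i' j') * ℓ - 1 ≤ j' ∧ m = per (fac w i' j') * ℓ := by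
  set a0 := c - 1 - m with ha0
  set b0 := c - 1 + m with hb0
  have hb0n : b0 ≤ w.length := hcm
  have hsne : fac w (a0 + 1) b0 ≠ [] := by
    refine List.length_pos_iff.mp ?_
    rw [fac_length w _ _ hb0n]
    omega
  set q := per (fac w (a0 + 1) b0) with hqdef
  have hq1 : 1 ≤ q := one_le_per hsne
  have hslen : (fac w (a0+1) b0).length = 2 * m := by
    rw [fac_length w _ _ hb0n]; omega
  have hmper : IsPeriod (fac w (a0+1) b0) m := by
    refine (isPeriod_fac_iff w (i := a0+1) (j := b0) m (by omega) (by omega) hb0n).mpr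
      ⟨hm, by omega, ?_⟩
    rw [Nat.add_sub_cancel]
    exact hsq
  have hqm : q ≤ m := per_le hmper
  have hqdvd : q ∣ m := per_dvd hsne hmper (by rw [hslen, ← hqdef]; omega)
  have hPq : PerOn w a0 b0 q := by
    have h := ((isPeriod_fac_iff w (i := a0+1) (j := b0) q (by omega) (by omega) hb0n).mp
      (per_isPeriod hsne)).2.2
    rwa [Nat.add_sub_cancel] at h
  -- extend to the left
  set A := {a | a ≤ a0 ∧ PerOn w a b0 q} with hA
  set astar := sInf A with hastar
  have hAne : A.Nonempty := ⟨a0, by exact ⟨le_rfl, hPq⟩⟩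
  have hastarA : astar ∈ A := Nat.sInf_mem hAne
  have hastar_le : astar ≤ a0 := hastarA.1
  have hPa : PerOn w astar b0 q := hastarA.2
  -- extend to the right
  set B := {b | b ≤ w.length ∧ PerOn w astar b q} with hB
  have hBbdd : BddAbove B := ⟨w.length, fun b hb => hb.1⟩
  set bstar := sSup B with hbstar
  have hBne : B.Nonempty := ⟨b0, by exact ⟨hb0n, hPa⟩⟩
  have hbstarB : bstar ∈ B := Nat.sSup_mem hBne hBbdd
  have hb0le : b0 ≤ bstar := le_csSup hBbdd (show b0 ∈ B by exact ⟨hb0n, hPa⟩)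
  have hbn : bstar ≤ w.length := hbstarB.1
  have hPab : PerOn w astar bstar q := hbstarB.2
  -- the run factor and its period
  have hfne : fac w (astar + 1) bstar ≠ [] := by
    refine List.length_pos_iff.mp ?_
    rw [fac_length w _ _ hbn]
    omega
  set p := per (fac w (astar+1) bstar) with hpdef
  have hp1 : 1 ≤ p := one_le_per hfne
  have hflen : (fac w (astar+1) bstar).length = bstar - astar := by
    rw [fac_length w _ _ hbn]; omega
  have hqper2 : IsPeriod (fac w (astar+1) bstar) q := by
    refine (isPeriod_fac_iff w (i := astar+1) (j := bstar) q (by omega) (by omega) hbn).mpr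
      ⟨hq1, by omega, ?_⟩
    rw [Nat.add_sub_cancel]
    exact hPab
  have hpq : p ≤ q := per_le hqper2
  have hpdvdq : p ∣ q := per_dvd hfne hqper2 (by rw [hflen, ← hpdef]; omega)
  have hpdvdm : p ∣ m := hpdvdq.trans hqdvd
  have hPp : PerOn w astar bstar p := by
    have h := ((isPeriod_fac_iff w (i := astar+1) (j := bstar) p (by omega) (by omega) hbn).mp
      (per_isPeriod hfne)).2.2
    rwa [Nat.add_sub_cancel] at h
  obtain ⟨tq, htq⟩ := hpdvdq
  have htq0 : tq ≠ 0 := by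
    rintro rfl
    simp only [Nat.mul_zero] at htq
    omega
  have emul : p * (tq - 1) + p = p * tq := by
    rw [← Nat.mul_succ]
    congr 1
    omega
  -- left maximality
  have hleft : astar + 1 = 1 ∨ ltr w (astar + 1 - 1) ≠ ltr w (astar + 1 + p - 1) := by
    rcases Nat.eq_zero_or_pos astar with h0 | h0
    · left; omega
    · right
      have hnper : ¬ PerOn w (astar - 1) b0 q := by
        intro hp'
        have hle : sInf A ≤ astar - 1 := Nat.sInf_le (show astar - 1 ∈ A by exact ⟨by omega, hp'⟩)
        omega
      unfold PerOn at hnper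
      push_neg at hnper
      obtain ⟨x, hx1, hx2, hx3⟩ := hnper
      have hxeq : x = astar - 1 := by
        by_contra hne'
        exact hx3 (hPab x (by omega) (by omega))
      subst hxeq
      have hstep := perOn_iterate hPp (tq - 1) (astar - 1 + p) (by omega) (by omega)
      rw [show astar - 1 + p + p * (tq - 1) = astar - 1 + q from by omega] at hstep
      unfold ltr
      rw [show astar + 1 - 1 - 1 = astar - 1 from by omega,
          show astar + 1 + p - 1 - 1 = astar - 1 + p from by omega]
      rw [hstep]
      exact hx3
  -- right maximality
  have hright : bstar = w.length ∨ ltr w (bstar + 1) ≠ ltr w (bstar - p + 1) := by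
    rcases eq_or_lt_of_le hbn with h0 | h0
    · left; exact h0
    · right
      have hnper : ¬ PerOn w astar (bstar + 1) q := by
        intro hp'
        have hle := le_csSup hBbdd (show bstar + 1 ∈ B by exact ⟨by omega, hp'⟩)
        omega
      unfold PerOn at hnper
      push_neg at hnper
      obtain ⟨x, hx1, hx2, hx3⟩ := hnper
      have hxeq : x + q = bstar := by
        by_contra hne'
        exact hx3 (hPab x hx1 (by omega))
      have hstep := perOn_iterate hPp (tq - 1) x hx1 (by omega)
      rw [show x + p * (tq - 1) = bstar - p from by omega] at hstep
      unfold ltr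
      rw [show bstar + 1 - 1 = bstar from by omega,
          show bstar - p + 1 - 1 = bstar - p from by omega]
      rw [← hstep, ← hxeq]
      exact hx3.symm
  refine ⟨astar + 1, bstar, m / p, ?_, ?_, ?_, ?_, ?_⟩
  · have hplem : p ≤ m := Nat.le_of_dvd (by omega) hpdvdm
    have := Nat.div_pos hplem hp1
    omega
  · refine ⟨by omega, by omega, hbn, ?_, ?_, ?_⟩
    · rw [← hpdef]; omega
    · rw [← hpdef]; exact hleft
    · rw [← hpdef]; exact hright
  · rw [← hpdef, Nat.mul_div_cancel' hpdvdm]; omega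
  · rw [← hpdef, Nat.mul_div_cancel' hpdvdm]; omega
  · rw [← hpdef, Nat.mul_div_cancel' hpdvdm]

theorem SC_eq_max_over_runs
    (w : List α) (n : ℕ) (hlen : w.length = n) (hn : 1 ≤ n)
    (c : ℕ) (hc : 1 ≤ c) (hcn : c ≤ n) :
    SC w c = sSup ({0} ∪ {m : ℕ | ∃ i' j' ℓ : ℕ, 1 ≤ ℓ ∧ IsRun w i' j' ∧
      i' + per (fac w i' j') * ℓ ≤ c ∧ c + per (fac w i' j') * ℓ - 1 ≤ j' ∧
      m = per (fac w i' j') * ℓ}) := by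
  subst hlen
  unfold SC
  set S : Set ℕ := {m | ∃ u : List α, u.length = m ∧ u ≠ [] ∧
    u <:+ fac w 1 (c - 1) ∧ u <+: fac w c w.length} with hSdef
  set T : Set ℕ := {m : ℕ | ∃ i' j' ℓ : ℕ, 1 ≤ ℓ ∧ IsRun w i' j' ∧
      i' + per (fac w i' j') * ℓ ≤ c ∧ c + per (fac w i' j') * ℓ - 1 ≤ j' ∧
      m = per (fac w i' j') * ℓ} with hTdef
  have hbddS : BddAbove S := by
    refine ⟨c - 1, fun m hm => ?_⟩
    rw [hSdef] at hm
    simp only [Set.mem_setOf_eq] at hm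
    obtain ⟨u, hul, -, hsuf, -⟩ := hm
    have h1 := hsuf.length_le
    rw [fac_length w 1 (c-1) (by omega)] at h1
    omega
  have hbddT : BddAbove ({0} ∪ T) := by
    refine ⟨c, ?_⟩
    rintro m (hm | hm)
    · simp only [Set.mem_singleton_iff] at hm
      omega
    · rw [hTdef] at hm
      simp only [Set.mem_setOf_eq] at hm
      obtain ⟨i', j', ℓ, hl, hrun, h1, h2, hmeq⟩ := hm
      unfold IsRun at hrun
      obtain ⟨hi1, -, -, -, -, -⟩ := hrun
      omega
  apply le_antisymm
  · rcases Set.eq_empty_or_nonempty S with hemp | hne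
    · rw [hemp, csSup_empty]
      exact bot_le
    · have hmem : sSup S ∈ S := Nat.sSup_mem hne hbddS
      rw [hSdef] at hmem
      simp only [Set.mem_setOf_eq] at hmem
      obtain ⟨u, hul, hune, hsuf, hpre⟩ := hmem
      obtain ⟨hm1, hmc, hcm, hsq⟩ := SCset_square w c (sSup S) hc hcn u hul hune hsuf hpre
      obtain ⟨i', j', ℓ, hl, hrun, h1, h2, hmeq⟩ :=
        square_to_run w c (sSup S) hc hm1 hmc hcm hsq
      refine le_csSup hbddT (Or.inr ?_)
      rw [hTdef]
      exact ⟨i', j', ℓ, hl, hrun, h1, h2, hmeq⟩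
  · refine csSup_le ⟨0, Or.inl rfl⟩ ?_
    rintro m (hm | hm)
    · simp only [Set.mem_singleton_iff] at hm
      subst hm
      exact Nat.zero_le _
    · rw [hTdef] at hm
      simp only [Set.mem_setOf_eq] at hm
      obtain ⟨i', j', ℓ, hl, hrun, h1, h2, hmeq⟩ := hm
      obtain ⟨u, hul, hune, hsuf, hpre⟩ := run_mem_SCset w c i' j' ℓ hc hl hrun h1 h2
      refine le_csSup hbddS ?_
      rw [hSdef]
      exact ⟨u, by rw [hul, hmeq], hune, hsuf, hpre⟩
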